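/- Let T > 0, α > 0, β ≥ 0, and let u : [0,T] → ℝ be differentiable and satisfy u'(t) ≤ −α·u(t)² + β at every t ∈ [0,T] at which u(t) > 0. Then for every t ∈ (0,T], t·u(t) ≤ (1 + √(1 + 4αβT²))/(2α). (ODE version of Lemma 5.4: the quantity t·u(t) is bounded by considering a point where it attains its maximum, exactly as in the maximum-principle argument of the paper.) -/

import Mathlib

/-- ODE version of Lemma 5.4: if `u' ≤ −αu² + β` wherever `u > 0` on `[0,T]`,
then `t·u(t) ≤ (1 + √(1 + 4αβT²))/(2α)` on `(0,T]`. -/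
theorem ode_lemma_5_4 (T α β : ℝ) (hT : 0 < T) (hα : 0 < α) (hβ : 0 ≤ β)
    (u u' : ℝ → ℝ)
    (hderiv : ∀ t ∈ Set.Icc (0 : ℝ) T, HasDerivWithinAt u (u' t) (Set.Icc 0 T) t)
    (hineq : ∀ t ∈ Set.Icc (0 : ℝ) T, 0 < u t → u' t ≤ -α * (u t) ^ 2 + β) :
    ∀ t ∈ Set.Ioc (0 : ℝ) T,
      t * u t ≤ (1 + Real.sqrt (1 + 4 * α * β * T ^ 2)) / (2 * α) := by
  set s := Real.sqrt (1 + 4 * α * β * T ^ 2) with hs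
  have harg : (0:ℝ) ≤ 1 + 4 * α * β * T ^ 2 := by positivity
  have hs1 : 1 ≤ s := Real.one_le_sqrt.mpr (by nlinarith [mul_nonneg (mul_nonneg hα.le hβ) (sq_nonneg T)])
  have hs2 : s ^ 2 = 1 + 4 * α * β * T ^ 2 := Real.sq_sqrt harg
  have hcont : ContinuousOn u (Set.Icc 0 T) := fun t ht =>
    (hderiv t ht).continuousWithinAt
  have hfc : ContinuousOn (fun t => t * u t) (Set.Icc 0 T) :=
    continuousOn_id.mul hcont
  obtain ⟨t₀, ht₀, hmax⟩ := isCompact_Icc.exists_isMaxOn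
    (Set.nonempty_Icc.mpr hT.le) hfc
  have hBpos : 0 < (1 + s) / (2 * α) := by positivity
  -- main claim
  have key : t₀ * u t₀ ≤ (1 + s) / (2 * α) := by
    by_contra hcon
    push_neg at hcon
    have hM : 0 < t₀ * u t₀ := lt_trans hBpos hcon
    have ht0pos : 0 < t₀ := by
      rcases lt_or_eq_of_le ht₀.1 with h | h
      · exact h
      · exfalso; rw [← h] at hM; simp at hM
    have hu : 0 < u t₀ := by by_contra h; push_neg at h; nlinarith
    -- derivative of f = t * u t at t₀ within Icc 0 t₀
    have hf : HasDerivWithinAt (fun t => t * u t) (1 * u t₀ + t₀ * u' t₀)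
        (Set.Icc 0 T) t₀ := (hasDerivWithinAt_id t₀ _).mul (hderiv t₀ ht₀)
    have hf' : HasDerivWithinAt (fun t => t * u t) (1 * u t₀ + t₀ * u' t₀)
        (Set.Icc 0 t₀) t₀ := hf.mono (Set.Icc_subset_Icc_right ht₀.2)
    have hslope := hasDerivWithinAt_iff_tendsto_slope.mp hf'
    rw [Set.Icc_sdiff_right] at hslope
    have hne : (nhdsWithin t₀ (Set.Ico 0 t₀)).NeBot := by
      rw [nhdsWithin_Ico_eq_nhdsLT ht0pos]
      infer_instance
    have hge : 0 ≤ 1 * u t₀ + t₀ * u' t₀ := by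
      refine ge_of_tendsto hslope ?_
      filter_upwards [eventually_mem_nhdsWithin] with t ht
      have ht' : t ∈ Set.Icc (0:ℝ) T := ⟨ht.1, le_trans ht.2.le ht₀.2⟩
      have hle : t * u t ≤ t₀ * u t₀ := hmax ht'
      have hlt : t - t₀ < 0 := sub_neg.mpr ht.2
      rw [slope_def_field]
      show 0 ≤ (t * u t - t₀ * u t₀) / (t - t₀)
      exact div_nonneg_iff.mpr (Or.inr ⟨by linarith, hlt.le⟩)
    have hub := hineq t₀ ht₀ hu
    -- 0 ≤ u t₀ + t₀ * u' t₀ and u' t₀ ≤ -α u² + β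
    have hq : α * (t₀ * u t₀) ^ 2 ≤ t₀ * u t₀ + β * t₀ ^ 2 := by
      nlinarith [mul_le_mul_of_nonneg_left hub ht0pos.le]
    have ht0T : t₀ ≤ T := ht₀.2
    have h1 : 1 + s < 2 * α * (t₀ * u t₀) := by
      rw [div_lt_iff₀ (by positivity)] at hcon; nlinarith
    have hsq : t₀ ^ 2 ≤ T ^ 2 := pow_le_pow_left₀ ht0pos.le ht0T 2
    have hprod : 0 < (2 * α * (t₀ * u t₀) - 1 - s) * (2 * α * (t₀ * u t₀) - 1 + s) :=
      mul_pos (by linarith) (by linarith)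
    nlinarith [mul_le_mul_of_nonneg_left hsq hβ,
      mul_le_mul_of_nonneg_left hq (show (0:ℝ) ≤ 4 * α by linarith)]
  intro t ht
  exact le_trans (hmax ⟨ht.1.le, ht.2⟩) key
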